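/- arXiv:2602.21194 — 2 statements merged into one kernel-verified Lean document; each statement's English description precedes it below -/
import Mathlib

section
/- Let L be a lattice, G ⊆ L a nestable set, and N ⊆ G a nested set. Then for every g ∈ N, the set {f ∈ N : f > g} of elements of N strictly above g is totally ordered (a chain). Consequently, every non-maximal element of N is covered (within N) by a unique element of N, so the Hasse diagram of N is a forest. -/
def Nestable {L : Type*} [Lattice L] [BoundedOrder L] (G : Set L) : Prop :=
  (∀ g ∈ G, ⊥ < g) ∧ (⊤ : L) ∈ G ∧
    ∀ f ∈ G, ∀ g ∈ G, ¬ f ≤ g → ¬ g ≤ f → f ⊔ g ∉ G → f ⊓ g = ⊥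

def Nested {L : Type*} [Lattice L] [BoundedOrder L] (G N : Set L) : Prop :=
  N ⊆ G ∧ ∀ s : Finset L, ↑s ⊆ N → 2 ≤ s.card →
    (∀ f ∈ s, ∀ g ∈ s, f ≠ g → ¬ f ≤ g) → s.sup id ∉ G

/-- For every `g` in a nested set `N`, the elements of `N` strictly above `g` form a
chain; consequently every non-maximal element of `N` is covered within `N` by a
unique element (the minimum of the elements of `N` strictly above it). -/
theorem nested_above_is_chain {L : Type*} [Lattice L] [BoundedOrder L] [Finite L]
    {G N : Set L} (hG : Nestable G) (hN : Nested G N) :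
    (∀ g ∈ N, IsChain (· ≤ ·) {f ∈ N | g < f}) ∧
    (∀ g ∈ N, (∃ f ∈ N, g < f) →
      ∃! f : L, f ∈ N ∧ g < f ∧ ∀ h ∈ N, g < h → f ≤ h) := by
  classical
  obtain ⟨hGpos, -, hGnest⟩ := hG
  obtain ⟨hNG, hNnest⟩ := hN
  have chain : ∀ g ∈ N, IsChain (· ≤ ·) {f ∈ N | g < f} := by
    intro g hg f₁ hf₁ f₂ hf₂ hne
    by_contra hcomp
    push_neg at hcomp
    obtain ⟨h12, h21⟩ := hcomp
    have hsub : ↑({f₁, f₂} : Finset L) ⊆ N := by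
      intro x hx
      simp only [Finset.coe_insert, Finset.coe_singleton, Set.mem_insert_iff,
        Set.mem_singleton_iff] at hx
      rcases hx with rfl | rfl
      · exact hf₁.1
      · exact hf₂.1
    have hcard : 2 ≤ ({f₁, f₂} : Finset L).card := by
      rw [Finset.card_pair hne]
    have hinc : ∀ f ∈ ({f₁, f₂} : Finset L), ∀ g' ∈ ({f₁, f₂} : Finset L),
        f ≠ g' → ¬ f ≤ g' := by
      intro a ha b hb hab
      simp only [Finset.mem_insert, Finset.mem_singleton] at ha hb
      rcases ha with rfl | rfl <;> rcases hb with rfl | rfl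
      · exact absurd rfl hab
      · exact h12
      · exact h21
      · exact absurd rfl hab
    have hsupG : f₁ ⊔ f₂ ∉ G := by
      have := hNnest {f₁, f₂} hsub hcard hinc
      simpa using this
    have hbot : f₁ ⊓ f₂ = ⊥ := hGnest f₁ (hNG hf₁.1) f₂ (hNG hf₂.1) h12 h21 hsupG
    have hgle : g ≤ f₁ ⊓ f₂ := le_inf hf₁.2.le hf₂.2.le
    have : (⊥ : L) < g := hGpos g (hNG hg)
    rw [hbot] at hgle
    exact absurd (le_antisymm hgle bot_le) this.ne'
  refine ⟨chain, ?_⟩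
  intro g hg ⟨f₀, hf₀N, hgf₀⟩
  have hS : f₀ ∈ {f ∈ N | g < f} := ⟨hf₀N, hgf₀⟩
  have hfin : ({f ∈ N | g < f} : Set L).Finite := Set.toFinite _
  obtain ⟨m, hmS, hmin⟩ : ∃ a ∈ {f ∈ N | g < f}, ∀ a' ∈ {f ∈ N | g < f}, id a' ≤ id a → id a = id a' := by
    obtain ⟨m, hm⟩ := Set.Finite.exists_minimal hfin ⟨f₀, hS⟩
    exact ⟨m, hm.prop, fun a ha hle => (hm.eq_of_le ha hle).symm⟩
  have hleast : ∀ h ∈ N, g < h → m ≤ h := by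
    intro h hhN hgh
    rcases eq_or_ne m h with rfl | hne
    · exact le_rfl
    · rcases chain g hg hmS ⟨hhN, hgh⟩ hne with hle | hle
      · exact hle
      · exact (hmin h ⟨hhN, hgh⟩ hle).le
  refine ⟨m, ⟨hmS.1, hmS.2, hleast⟩, ?_⟩
  rintro f ⟨hfN, hgf, hfle⟩
  exact le_antisymm (hfle m hmS.1 hmS.2) (hleast f hfN hgf)
end

section
/- Let E be a finite set and N a laminar family of nonempty subsets of E (i.e., for all f, g ∈ N either f ⊆ g, g ⊆ f, or f ∩ g = ∅). For each f ∈ N, let M_f be the set of maximal elements of {g ∈ N : g ⊊ f}, and suppose a choice h_f ∈ f \ ⋃_{g ∈ M_f} g is given for each f ∈ N (assume such elements exist). Then for every f ∈ N: {g ∈ N : h_g ∈ f} = {g ∈ N : g ⊆ f}. -/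
/-- Let `N` be a laminar family of nonempty subsets of a finite set `E`, and for
each `f ∈ N` let `h f` be an element of `f` lying in no maximal proper member of
`N` below `f`. Then for every `f ∈ N`, `{g ∈ N : h g ∈ f} = {g ∈ N : g ⊆ f}`. -/
theorem laminar_private_atom {E : Type*} [Fintype E] (N : Set (Set E))
    (hlam : ∀ f ∈ N, ∀ g ∈ N, f ⊆ g ∨ g ⊆ f ∨ f ∩ g = ∅)
    (hne : ∀ f ∈ N, f.Nonempty)
    (h : Set E → E)
    (hmem : ∀ f ∈ N, h f ∈ f)
    (hpriv : ∀ f ∈ N, ∀ g ∈ N, g ⊂ f →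
      (∀ g' ∈ N, g ⊆ g' → g' ⊂ f → g' = g) → h f ∉ g) :
    ∀ f ∈ N, {g | g ∈ N ∧ h g ∈ f} = {g | g ∈ N ∧ g ⊆ f} := by
  intro f hf
  ext g
  simp only [Set.mem_setOf_eq]
  constructor
  · rintro ⟨hg, hhg⟩
    refine ⟨hg, ?_⟩
    rcases hlam f hf g hg with hfg | hgf | hdisj
    · -- f ⊆ g; show g ⊆ f; else f ⊊ g and h g ∈ f leads to contradiction
      by_contra hngf
      have hfg' : f ⊂ g := ⟨hfg, fun hc => hngf hc⟩
      -- maximal element of S = {x ∈ N | f ⊆ x ∧ x ⊊ g}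
      set S : Set (Set E) := {x | x ∈ N ∧ f ⊆ x ∧ x ⊂ g} with hS
      have hSfin : S.Finite := Set.toFinite S
      have hSne : S.Nonempty := ⟨f, hf, subset_rfl, hfg'⟩
      obtain ⟨m, hmS, hmax⟩ := hSfin.exists_maximalFor id S hSne
      obtain ⟨hmN, hfm, hmg⟩ := hmS
      exact hpriv g hg m hmN hmg
        (fun g' hg' hmg' hg'g => subset_antisymm (hmax ⟨hg', hfm.trans hmg', hg'g⟩ hmg') hmg') (hfm hhg)
    · exact hgf
    · exact absurd hdisj (Set.nonempty_iff_ne_empty.mp ⟨h g, hhg, hmem g hg⟩)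
  · rintro ⟨hg, hsub⟩
    exact ⟨hg, hsub (hmem g hg)⟩
end
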